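/- Let X and Y be complex topological vector spaces, Γ a set of continuous linear operators on X, and Γ₁ a set of continuous linear operators on Y. Suppose Γ and Γ₁ are quasi-similar, i.e., there is a continuous linear operator φ : X → Y with dense range such that for every T ∈ Γ there exists S ∈ Γ₁ with S ∘ φ = φ ∘ T. If Γ is diskcyclic in X, then Γ₁ is diskcyclic in Y; moreover, for every diskcyclic vector x of Γ, φ(x) is a diskcyclic vector of Γ₁ (so φ(𝔻C(Γ)) ⊆ 𝔻C(Γ₁)). -/

import Mathlib

/-- Diskcyclicity is preserved under quasi-similarity: if `φ : X → Y` is a continuous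
linear operator with dense range intertwining `Γ` with `Γ₁`, then `φ` maps diskcyclic
vectors of `Γ` to diskcyclic vectors of `Γ₁`; in particular if `Γ` is diskcyclic then
so is `Γ₁`. -/
theorem stmt_2 {X Y : Type*}
    [AddCommGroup X] [Module ℂ X] [TopologicalSpace X] [IsTopologicalAddGroup X]
    [ContinuousSMul ℂ X]
    [AddCommGroup Y] [Module ℂ Y] [TopologicalSpace Y] [IsTopologicalAddGroup Y]
    [ContinuousSMul ℂ Y]
    (Γ : Set (X →L[ℂ] X)) (Γ₁ : Set (Y →L[ℂ] Y)) (φ : X →L[ℂ] Y) (hφ : DenseRange ⇑φ)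
    (hsim : ∀ T ∈ Γ, ∃ S ∈ Γ₁, S ∘L φ = φ ∘L T) :
    (∀ x : X, Dense {y : X | ∃ α : ℂ, ‖α‖ ≤ 1 ∧ ∃ T ∈ Γ, y = α • T x} →
      Dense {y : Y | ∃ α : ℂ, ‖α‖ ≤ 1 ∧ ∃ S ∈ Γ₁, y = α • S (φ x)}) ∧
    ((∃ x : X, Dense {y : X | ∃ α : ℂ, ‖α‖ ≤ 1 ∧ ∃ T ∈ Γ, y = α • T x}) →
      ∃ y₀ : Y, Dense {y : Y | ∃ α : ℂ, ‖α‖ ≤ 1 ∧ ∃ S ∈ Γ₁, y = α • S y₀}) := by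
  have main : ∀ x : X, Dense {y : X | ∃ α : ℂ, ‖α‖ ≤ 1 ∧ ∃ T ∈ Γ, y = α • T x} →
      Dense {y : Y | ∃ α : ℂ, ‖α‖ ≤ 1 ∧ ∃ S ∈ Γ₁, y = α • S (φ x)} := by
    intro x hx
    have himg : Dense (⇑φ '' {y : X | ∃ α : ℂ, ‖α‖ ≤ 1 ∧ ∃ T ∈ Γ, y = α • T x}) :=
      hφ.dense_image φ.continuous hx
    refine himg.mono ?_
    rintro _ ⟨z, ⟨α, hα, T, hT, rfl⟩, rfl⟩
    obtain ⟨S, hS, hcomm⟩ := hsim T hT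
    refine ⟨α, hα, S, hS, ?_⟩
    have : S (φ x) = φ (T x) := DFunLike.congr_fun hcomm x
    simp [map_smul, this]
  exact ⟨main, fun ⟨x, hx⟩ => ⟨φ x, main x hx⟩⟩
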